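/- Let n ≥ 1 be an integer, α ∈ [0,1), η > 0, let p ∈ A_α satisfy p_i > 0 for all i, and let û ∈ ℝ^n. Set p̃_i = p_i·exp(η·û_i) for i = 1,…,n, and let π be a permutation of {1,…,n} such that p̃_{π(1)} ≤ … ≤ p̃_{π(n)}. Let i* be the smallest index i ∈ {1,…,n} such that p̃_{π(i)}·(1 − ((i−1)/n)·α) > (α/n)·Σ_{j=i}^n p̃_{π(j)} (such an index exists). Define x ∈ ℝ^n by x_i = α/n if π^{-1}(i) < i*, and x_i = (1 − ((i*−1)/n)·α)·p̃_i / (Σ_{j=i*}^n p̃_{π(j)}) otherwise. Then x ∈ A_α and for every q ∈ A_α one has −η·⟨x, û⟩ + D(x‖p) ≤ −η·⟨q, û⟩ + D(q‖p); that is, x solves the OSMD sampling-distribution update. -/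

import Mathlib

open Finset

/-- Unnormalized negative-entropy Bregman divergence
`D(x‖y) = ∑ i, (x i * log (x i / y i) - x i + y i)` (with `0·log 0 = 0`,
which holds automatically since `Real.log 0 = 0`). -/
noncomputable def breg {n : ℕ} (x y : Fin n → ℝ) : ℝ :=
  ∑ i, (x i * Real.log (x i / y i) - x i + y i)

/-- The clipped simplex `A_α = {x : ∑ i, x i = 1 ∧ ∀ i, x i ≥ α / n}`. -/
def clippedSimplex (n : ℕ) (α : ℝ) : Set (Fin n → ℝ) :=
  {x | (∑ i, x i) = 1 ∧ ∀ i, α / n ≤ x i}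

/-- Pointwise convexity inequality for `t ↦ t log(t/c)`. -/
lemma conv_aux (a t cc : ℝ) (ha : 0 < a) (ht : 0 ≤ t) (hcc : 0 < cc) :
    a * Real.log (a / cc) + Real.log (a / cc) * (t - a) + (t - a) ≤ t * Real.log (t / cc) := by
  rcases ht.eq_or_lt with h | h
  · subst h
    simp only [Real.log_zero, zero_div, zero_mul]
    nlinarith [sq_nonneg a]
  · have e1 : Real.log (t / cc) = Real.log t - Real.log cc := Real.log_div h.ne' hcc.ne'
    have e2 : Real.log (a / cc) = Real.log a - Real.log cc := Real.log_div ha.ne' hcc.ne'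
    have hlog : Real.log (a / t) ≤ a / t - 1 := Real.log_le_sub_one_of_pos (by positivity)
    have h2 : t * Real.log (a / t) ≤ a - t := by
      have h3 := mul_le_mul_of_nonneg_left hlog h.le
      rw [mul_sub, mul_one, mul_div_cancel₀ _ h.ne'] at h3
      exact h3
    have e4 : Real.log (a / t) = Real.log a - Real.log t := Real.log_div ha.ne' h.ne'
    rw [e4] at h2
    rw [e1, e2]
    nlinarith [h2]

theorem stmt_0 (n : ℕ) (hn : 1 ≤ n) (α η : ℝ) (hα : 0 ≤ α ∧ α < 1) (hη : 0 < η)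
    (p : Fin n → ℝ) (hp : p ∈ clippedSimplex n α) (hppos : ∀ i, 0 < p i)
    (u : Fin n → ℝ) (pt : Fin n → ℝ)
    (hpt : ∀ i, pt i = p i * Real.exp (η * u i))
    (π : Equiv.Perm (Fin n)) (hπ : Monotone fun i => pt (π i))
    (istar : Fin n)
    (histar : IsLeast {i : Fin n |
      pt (π i) * (1 - ((i : ℕ) : ℝ) / n * α) > α / n * ∑ j ∈ Finset.Ici i, pt (π j)} istar)
    (x : Fin n → ℝ)
    (hx : ∀ i, x i = if π.symm i < istar then α / n
      else (1 - ((istar : ℕ) : ℝ) / n * α) * pt i / ∑ j ∈ Finset.Ici istar, pt (π j)) :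
    x ∈ clippedSimplex n α ∧
      ∀ q ∈ clippedSimplex n α,
        -η * (∑ i, x i * u i) + breg x p ≤ -η * (∑ i, q i * u i) + breg q p := by
  obtain ⟨hα0, hα1⟩ := hα
  have hn0 : (0 : ℝ) < (n : ℝ) := by exact_mod_cast Nat.lt_of_lt_of_le Nat.zero_lt_one hn
  have hptpos : ∀ i, 0 < pt i := fun i => by rw [hpt]; exact mul_pos (hppos i) (Real.exp_pos _)
  set S := ∑ j ∈ Finset.Ici istar, pt (π j) with hSdef
  have hSpos : 0 < S :=
    Finset.sum_pos (fun j _ => hptpos _) ⟨istar, Finset.mem_Ici.2 le_rfl⟩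
  have hfac : 0 < 1 - ((istar : ℕ) : ℝ) / n * α := by
    have h1 : ((istar : ℕ) : ℝ) / n * α ≤ ((istar : ℕ) : ℝ) / n :=
      mul_le_of_le_one_right (by positivity) hα1.le
    have h2 : ((istar : ℕ) : ℝ) / n < 1 := by
      rw [div_lt_one hn0]; exact_mod_cast istar.isLt
    linarith
  set c := (1 - ((istar : ℕ) : ℝ) / n * α) / S with hcdef
  clear_value c S
  have hcpos : 0 < c := hcdef ▸ div_pos hfac hSpos
  -- the condition at istar
  have h1star : α / n * S < pt (π istar) * (1 - ((istar : ℕ) : ℝ) / n * α) := by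
    have := histar.1
    simp only [Set.mem_setOf_eq, gt_iff_lt] at this
    rw [hSdef]
    exact this
  -- Key lemma A: clipped coordinates
  have hA : ∀ j : Fin n, j < istar →
      pt (π j) * (1 - ((istar : ℕ) : ℝ) / n * α) ≤ α / n * S := by
    intro j hj
    have hjval : (j : ℕ) < (istar : ℕ) := Fin.lt_def.1 hj
    have histar0 : 0 < (istar : ℕ) := by omega
    have hmlt : (istar : ℕ) - 1 < n := by
      have := istar.isLt; omega
    obtain ⟨m, hmval⟩ : ∃ m : Fin n, (m : ℕ) = (istar : ℕ) - 1 := ⟨⟨_, hmlt⟩, rfl⟩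
    have hm_lt : m < istar := by rw [Fin.lt_def, hmval]; omega
    have hjm : pt (π j) ≤ pt (π m) := hπ (by rw [Fin.le_def, hmval]; omega)
    have hnot : ¬ (pt (π m) * (1 - ((m : ℕ) : ℝ) / n * α) >
        α / n * ∑ k ∈ Finset.Ici m, pt (π k)) :=
      fun h => absurd (histar.2 h) (not_le.2 hm_lt)
    push_neg at hnot
    have hins : Finset.Ici m = insert m (Finset.Ici istar) := by
      ext k
      simp only [Finset.mem_Ici, Finset.mem_insert, Fin.le_def, Fin.ext_iff, hmval]
      omega
    have hnm : m ∉ Finset.Ici istar := by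
      simp only [Finset.mem_Ici, Fin.le_def, hmval]
      omega
    rw [hins, Finset.sum_insert hnm, ← hSdef] at hnot
    have hcast : ((m : ℕ) : ℝ) = ((istar : ℕ) : ℝ) - 1 := by
      rw [hmval, Nat.cast_sub histar0]; simp
    rw [hcast] at hnot
    have hexp : pt (π m) * (1 - (((istar : ℕ) : ℝ) - 1) / n * α) - α / n * pt (π m)
        = pt (π m) * (1 - ((istar : ℕ) : ℝ) / n * α) := by
      field_simp
      ring
    have key : pt (π m) * (1 - ((istar : ℕ) : ℝ) / n * α) ≤ α / n * S := by
      nlinarith [hnot, hexp]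
    calc pt (π j) * (1 - ((istar : ℕ) : ℝ) / n * α)
        ≤ pt (π m) * (1 - ((istar : ℕ) : ℝ) / n * α) :=
          mul_le_mul_of_nonneg_right hjm hfac.le
      _ ≤ α / n * S := key
  -- Key lemma B: unclipped coordinates
  have hB : ∀ j : Fin n, istar ≤ j →
      α / n * S < pt (π j) * (1 - ((istar : ℕ) : ℝ) / n * α) := by
    intro j hj
    have h2 : pt (π istar) ≤ pt (π j) := hπ hj
    nlinarith [h1star]
  -- values of x along π
  have hxval : ∀ j : Fin n, x (π j) = if j < istar then α / n else c * pt (π j) := by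
    intro j
    rw [hx (π j), Equiv.symm_apply_apply]
    split_ifs with h
    · rfl
    · rw [hcdef]; ring
  -- positivity of α/n when clipping happens
  have hclip_pos : ∀ j : Fin n, j < istar → 0 < α / n := by
    intro j hj
    by_contra hcon
    push_neg at hcon
    have hle : α / n * S ≤ 0 * S := mul_le_mul_of_nonneg_right hcon hSpos.le
    nlinarith [mul_pos (hptpos (π j)) hfac, hA j hj]
  have hxpos : ∀ i, 0 < x i := by
    intro i
    have hv := hxval (π.symm i)
    rw [Equiv.apply_symm_apply] at hv
    rw [hv]
    split_ifs with h
    · exact hclip_pos _ h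
    · exact mul_pos hcpos (hptpos _)
  -- lower bound
  have hxge : ∀ i, α / n ≤ x i := by
    intro i
    have hv := hxval (π.symm i)
    rw [Equiv.apply_symm_apply] at hv
    rw [hv]
    split_ifs with h
    · exact le_rfl
    · have hb := hB _ (le_of_not_gt h)
      rw [Equiv.apply_symm_apply] at hb
      rw [hcdef, div_mul_eq_mul_div, le_div_iff₀ hSpos]
      nlinarith [hb]
  -- sum to one
  have hdisj2 : Disjoint (Finset.Iio istar) (Finset.Ici istar) := by
    rw [Finset.disjoint_left]
    intro k hk hk'
    exact absurd (Finset.mem_Ici.1 hk') (not_le.2 (Finset.mem_Iio.1 hk))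
  have hxsum : ∑ i, x i = 1 := by
    rw [← Equiv.sum_comp π x]
    have huniv : (Finset.univ : Finset (Fin n)) = Finset.Iio istar ∪ Finset.Ici istar := by
      ext k; simpa using lt_or_ge k istar
    rw [huniv, Finset.sum_union hdisj2]
    have e1 : ∑ j ∈ Finset.Iio istar, x (π j) = ((istar : ℕ) : ℝ) * (α / n) := by
      rw [Finset.sum_congr rfl (fun j hj => by rw [hxval j, if_pos (Finset.mem_Iio.1 hj)]),
        Finset.sum_const, nsmul_eq_mul]
      congr 1
      simp
    have e2 : ∑ j ∈ Finset.Ici istar, x (π j) = c * S := by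
      rw [Finset.sum_congr rfl
        (fun j hj => by rw [hxval j, if_neg (not_lt.2 (Finset.mem_Ici.1 hj))]),
        ← Finset.mul_sum, ← hSdef]
    rw [e1, e2, hcdef, div_mul_cancel₀ _ hSpos.ne']
    ring
  refine ⟨⟨hxsum, hxge⟩, ?_⟩
  intro q hq
  obtain ⟨hq1, hq2⟩ := hq
  have hq0 : ∀ i, 0 ≤ q i := fun i => le_trans (by positivity) (hq2 i)
  -- rewrite the objective
  have hobj : ∀ z : Fin n → ℝ, (∀ i, 0 ≤ z i) → (∑ i, z i) = 1 →
      -η * (∑ i, z i * u i) + breg z p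
        = (∑ i, z i * Real.log (z i / pt i)) + ((∑ i, p i) - 1) := by
    intro z hz hz1
    have key : ∀ i, -η * (z i * u i) + (z i * Real.log (z i / p i) - z i + p i)
        = z i * Real.log (z i / pt i) - z i + p i := by
      intro i
      rcases (hz i).eq_or_lt with h | h
      · rw [← h]; simp
      · rw [hpt i, Real.log_div h.ne' (hppos i).ne',
          Real.log_div h.ne' (mul_pos (hppos i) (Real.exp_pos _)).ne',
          Real.log_mul (hppos i).ne' (Real.exp_ne_zero _), Real.log_exp]
        ring
    unfold breg
    rw [Finset.mul_sum, ← Finset.sum_add_distrib,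
      Finset.sum_congr rfl (fun i _ => key i), Finset.sum_add_distrib,
      Finset.sum_sub_distrib, hz1]
    ring
  rw [hobj x (fun i => (hxpos i).le) hxsum, hobj q hq0 hq1]
  -- main nonnegativity of the first-order term
  have hmain : 0 ≤ ∑ i, Real.log (x i / pt i) * (q i - x i) := by
    rw [← Equiv.sum_comp π (fun i => Real.log (x i / pt i) * (q i - x i))]
    have hsplitsum : ∀ j : Fin n,
        Real.log (x (π j) / pt (π j)) * (q (π j) - x (π j))
          = Real.log c * (q (π j) - x (π j))
            + (Real.log (x (π j) / pt (π j)) - Real.log c) * (q (π j) - x (π j)) := by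
      intro j; ring
    rw [Finset.sum_congr rfl (fun j _ => hsplitsum j), Finset.sum_add_distrib,
      ← Finset.mul_sum, Finset.sum_sub_distrib,
      Equiv.sum_comp π q, Equiv.sum_comp π x, hq1, hxsum]
    simp only [sub_self, mul_zero, zero_add]
    apply Finset.sum_nonneg
    intro j _
    rcases lt_or_ge j istar with h | h
    · have hxj : x (π j) = α / n := by rw [hxval j, if_pos h]
      apply mul_nonneg
      · rw [hxj]
        have h1 : c * pt (π j) ≤ α / n := by
          rw [hcdef, div_mul_eq_mul_div, div_le_iff₀ hSpos]
          nlinarith [hA j h]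
        have h2 : Real.log c ≤ Real.log (α / n / pt (π j)) := by
          apply Real.log_le_log hcpos
          rw [le_div_iff₀ (hptpos (π j))]
          exact h1
        linarith
      · rw [hxj]
        linarith [hq2 (π j)]
    · have hxj : x (π j) = c * pt (π j) := by rw [hxval j, if_neg (not_lt.2 h)]
      rw [hxj, mul_div_assoc, div_self (hptpos (π j)).ne', mul_one]
      simp
  -- convexity step
  have hstep : ∀ i,
      x i * Real.log (x i / pt i) + Real.log (x i / pt i) * (q i - x i) + (q i - x i)
        ≤ q i * Real.log (q i / pt i) :=
    fun i => conv_aux _ _ _ (hxpos i) (hq0 i) (hptpos i)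
  have hsum := Finset.sum_le_sum (fun i (_ : i ∈ Finset.univ) => hstep i)
  rw [Finset.sum_add_distrib, Finset.sum_add_distrib, Finset.sum_sub_distrib, hq1, hxsum] at hsum
  linarith [hmain]
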